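/- For all μ > 0, λ > 0 and x > 0, ∫₀ˣ (λ^{3/2}μ/(√(2π)(λ+μ))) z^{−5/2} E(z;μ,λ) dz = Φ(√(λ/x)·(x/μ − 1)) − ((λ−μ)/(λ+μ))·exp(2λ/μ)·Φ(−√(λ/x)·(x/μ + 1)) + (√(2λ)·μ/(√(πx)·(λ+μ)))·exp(λ/μ)·exp(−(λ/(2x))·(x²/μ² + 1)). (This is the cumulative distribution function of the generalized inverse Gaussian distribution with p = −3/2.) -/

import Mathlib

open MeasureTheory Real Filter Set Topology

/-- Standard normal cumulative distribution function. -/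
noncomputable def stdNormalCDF (x : ℝ) : ℝ :=
  ∫ t in Set.Iic x, (Real.sqrt (2 * Real.pi))⁻¹ * Real.exp (-t ^ 2 / 2)

/-- The exponential factor `E(z; μ, λ) = exp(−λ(z−μ)²/(2μ²z))`. -/
noncomputable def gigE (z μ lam : ℝ) : ℝ :=
  Real.exp (-(lam * (z - μ) ^ 2) / (2 * μ ^ 2 * z))



lemma gaussInt : Integrable (fun t : ℝ => (Real.sqrt (2 * Real.pi))⁻¹ * Real.exp (-t ^ 2 / 2)) := by
  have h : Integrable (fun t : ℝ => Real.exp (-(1/2) * t ^ 2)) := integrable_exp_neg_mul_sq (by norm_num)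
  have := h.const_mul (Real.sqrt (2 * Real.pi))⁻¹
  refine this.congr (by filter_upwards with t; ring_nf)

lemma gaussCont : Continuous (fun t : ℝ => (Real.sqrt (2 * Real.pi))⁻¹ * Real.exp (-t ^ 2 / 2)) := by
  continuity

lemma cdf_eq (x : ℝ) : stdNormalCDF x
    = stdNormalCDF 0 + ∫ t in (0:ℝ)..x, (Real.sqrt (2 * Real.pi))⁻¹ * Real.exp (-t ^ 2 / 2) := by
  rw [← intervalIntegral.integral_Iic_sub_Iic gaussInt.integrableOn gaussInt.integrableOn]
  simp [stdNormalCDF]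

lemma cdf_hasDeriv (x : ℝ) :
    HasDerivAt stdNormalCDF ((Real.sqrt (2 * Real.pi))⁻¹ * Real.exp (-x ^ 2 / 2)) x := by
  have h : HasDerivAt (fun u => ∫ t in (0:ℝ)..u, (Real.sqrt (2 * Real.pi))⁻¹ * Real.exp (-t ^ 2 / 2))
      ((Real.sqrt (2 * Real.pi))⁻¹ * Real.exp (-x ^ 2 / 2)) x :=
    intervalIntegral.integral_hasDerivAt_right gaussInt.intervalIntegrable
      gaussCont.aestronglyMeasurable.stronglyMeasurableAtFilter gaussCont.continuousAt
  have := (h.const_add (stdNormalCDF 0))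
  exact this.congr_of_eventuallyEq (by filter_upwards with u; rw [cdf_eq u])

lemma cdf_atBot : Tendsto stdNormalCDF atBot (𝓝 0) := by
  have h := MeasureTheory.intervalIntegral_tendsto_integral_Iic (μ := volume) (l := atBot)
    (a := fun a : ℝ => a) 0 gaussInt.integrableOn tendsto_id
  have h2 : Tendsto (fun a : ℝ => stdNormalCDF 0 - ∫ t in a..(0:ℝ),
      (Real.sqrt (2 * Real.pi))⁻¹ * Real.exp (-t ^ 2 / 2)) atBot (𝓝 (stdNormalCDF 0 - stdNormalCDF 0)) := by
    exact (tendsto_const_nhds.sub h)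
  simp only [sub_self] at h2
  refine h2.congr fun a => ?_
  rw [cdf_eq a, intervalIntegral.integral_symm]
  ring



noncomputable def Ggig (μ lam y : ℝ) : ℝ :=
  stdNormalCDF (Real.sqrt lam * (Real.sqrt y / μ - (Real.sqrt y)⁻¹))
    - (lam - μ) / (lam + μ) * Real.exp (2 * lam / μ) *
      stdNormalCDF (-(Real.sqrt lam) * (Real.sqrt y / μ + (Real.sqrt y)⁻¹))
    + Real.sqrt (2 * lam) * μ * Real.exp (lam / μ) / (Real.sqrt Real.pi * (lam + μ)) *
      ((Real.sqrt y)⁻¹ * Real.exp (-(lam / (2 * μ ^ 2)) * y - lam / 2 * y⁻¹))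

lemma Ggig_hasDeriv (μ lam z : ℝ) (hμ : 0 < μ) (hlam : 0 < lam) (hz : 0 < z) :
    HasDerivAt (Ggig μ lam)
      (lam ^ ((3:ℝ)/2) * μ / (Real.sqrt (2 * Real.pi) * (lam + μ)) * z ^ (-(5:ℝ)/2)
        * gigE z μ lam) z := by
  have hs0 : 0 < Real.sqrt z := Real.sqrt_pos.mpr hz
  have hss : Real.sqrt z * Real.sqrt z = z := Real.mul_self_sqrt hz.le
  have hl : Real.sqrt lam * Real.sqrt lam = lam := Real.mul_self_sqrt hlam.le
  have hsqrt : HasDerivAt Real.sqrt (1 / (2 * Real.sqrt z)) z := Real.hasDerivAt_sqrt hz.ne'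
  have hinvs : HasDerivAt (fun y => (Real.sqrt y)⁻¹)
      (-(1 / (2 * Real.sqrt z)) / (Real.sqrt z) ^ 2) z := hsqrt.inv hs0.ne'
  have harg1 : HasDerivAt (fun y => Real.sqrt lam * (Real.sqrt y / μ - (Real.sqrt y)⁻¹))
      (Real.sqrt lam * (1 / (2 * Real.sqrt z) / μ - -(1 / (2 * Real.sqrt z)) / (Real.sqrt z) ^ 2)) z :=
    ((hsqrt.div_const μ).sub hinvs).const_mul _
  have h1 : HasDerivAt (fun y => stdNormalCDF (Real.sqrt lam * (Real.sqrt y / μ - (Real.sqrt y)⁻¹)))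
      (((Real.sqrt (2 * Real.pi))⁻¹ *
          Real.exp (-(Real.sqrt lam * (Real.sqrt z / μ - (Real.sqrt z)⁻¹)) ^ 2 / 2)) *
        (Real.sqrt lam * (1 / (2 * Real.sqrt z) / μ - -(1 / (2 * Real.sqrt z)) / (Real.sqrt z) ^ 2))) z :=
    (cdf_hasDeriv _).comp z harg1
  have harg2 : HasDerivAt (fun y => -(Real.sqrt lam) * (Real.sqrt y / μ + (Real.sqrt y)⁻¹))
      (-(Real.sqrt lam) * (1 / (2 * Real.sqrt z) / μ + -(1 / (2 * Real.sqrt z)) / (Real.sqrt z) ^ 2)) z :=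
    ((hsqrt.div_const μ).add hinvs).const_mul _
  have h2' : HasDerivAt (fun y => stdNormalCDF (-(Real.sqrt lam) * (Real.sqrt y / μ + (Real.sqrt y)⁻¹)))
      (((Real.sqrt (2 * Real.pi))⁻¹ *
          Real.exp (-(-(Real.sqrt lam) * (Real.sqrt z / μ + (Real.sqrt z)⁻¹)) ^ 2 / 2)) *
        (-(Real.sqrt lam) * (1 / (2 * Real.sqrt z) / μ + -(1 / (2 * Real.sqrt z)) / (Real.sqrt z) ^ 2))) z :=
    (cdf_hasDeriv _).comp z harg2
  have h2 := h2'.const_mul ((lam - μ) / (lam + μ) * Real.exp (2 * lam / μ))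
  have hinvy : HasDerivAt (fun y : ℝ => y⁻¹) (-((z : ℝ) ^ 2)⁻¹) z := hasDerivAt_inv hz.ne'
  have hu : HasDerivAt (fun y : ℝ => -(lam / (2 * μ ^ 2)) * y - lam / 2 * y⁻¹)
      (-(lam / (2 * μ ^ 2)) * 1 - lam / 2 * -((z : ℝ) ^ 2)⁻¹) z :=
    ((hasDerivAt_id z).const_mul _).sub (hinvy.const_mul _)
  have hexp : HasDerivAt (fun y : ℝ => Real.exp (-(lam / (2 * μ ^ 2)) * y - lam / 2 * y⁻¹))
      (Real.exp (-(lam / (2 * μ ^ 2)) * z - lam / 2 * z⁻¹) *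
        (-(lam / (2 * μ ^ 2)) * 1 - lam / 2 * -((z : ℝ) ^ 2)⁻¹)) z := hu.exp
  have h3' := (hinvs.mul hexp).const_mul
      (Real.sqrt (2 * lam) * μ * Real.exp (lam / μ) / (Real.sqrt Real.pi * (lam + μ)))
  have H := (h1.sub h2).add h3'
  have H' : HasDerivAt (Ggig μ lam) _ z := H
  convert H' using 1
  set s := Real.sqrt z with hsdef
  set t := Real.sqrt lam with htdef
  set P := gigE z μ lam with hPdef
  have hμ0 : μ ≠ 0 := hμ.ne'
  have hs0' : s ≠ 0 := hs0.ne'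
  have hlμ : lam + μ ≠ 0 := by positivity
  have hE1 : rexp (-(t * (s / μ - s⁻¹)) ^ 2 / 2) = P := by
    rw [hPdef]; unfold gigE
    congr 1
    rw [← hss, ← hl]
    field_simp
  have hE2 : rexp (-(-t * (s / μ + s⁻¹)) ^ 2 / 2) = P / rexp (2 * lam / μ) := by
    rw [eq_div_iff (Real.exp_ne_zero _), ← Real.exp_add, hPdef]; unfold gigE
    congr 1
    rw [← hss, ← hl]
    field_simp
    ring
  have hE3 : rexp (-(lam / (2 * μ ^ 2)) * z - lam / 2 * z⁻¹) = P / rexp (lam / μ) := by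
    rw [eq_div_iff (Real.exp_ne_zero _), ← Real.exp_add, hPdef]; unfold gigE
    congr 1
    rw [← hss, ← hl]
    field_simp
    ring
  have h25 : z ^ ((-5 : ℝ)/2) = (s ^ 5)⁻¹ := by
    rw [show ((-5:ℝ)/2) = -(5/2) by norm_num, Real.rpow_neg hz.le]
    congr 1
    rw [show ((5:ℝ)/2) = (1/2) * 5 by norm_num, Real.rpow_mul hz.le, ← Real.sqrt_eq_rpow,
      show (5:ℝ) = ((5:ℕ):ℝ) by norm_num, Real.rpow_natCast]
  have h32 : lam ^ ((3 : ℝ)/2) = t ^ 3 := by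
    rw [show ((3:ℝ)/2) = (1/2) * 3 by norm_num, Real.rpow_mul hlam.le, ← Real.sqrt_eq_rpow,
      show (3:ℝ) = ((3:ℕ):ℝ) by norm_num, Real.rpow_natCast]
  have h2lam : Real.sqrt (2 * lam) = Real.sqrt 2 * t := Real.sqrt_mul (by norm_num) lam
  have h2pi : Real.sqrt (2 * Real.pi) = Real.sqrt 2 * Real.sqrt Real.pi :=
    Real.sqrt_mul (by norm_num) Real.pi
  have hsq2 : Real.sqrt 2 * Real.sqrt 2 = 2 := Real.mul_self_sqrt (by norm_num)
  have hpi0 : (0:ℝ) < Real.sqrt Real.pi := Real.sqrt_pos.mpr Real.pi_pos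
  have h2pi0 : (0:ℝ) < Real.sqrt (2 * Real.pi) := Real.sqrt_pos.mpr (by positivity)
  have hA : Real.sqrt (2 * lam) * μ * rexp (lam / μ) / (Real.sqrt Real.pi * (lam + μ))
      = 2 * t * μ * rexp (lam / μ) / (Real.sqrt (2 * Real.pi) * (lam + μ)) := by
    rw [h2lam, h2pi, div_eq_div_iff (by positivity) (by positivity)]
    linear_combination (t * μ * Real.exp (lam / μ) * Real.sqrt Real.pi * (lam + μ)) * hsq2
  rw [hE1, hE2, hE3, h25, h32, hA, ← hss, ← hl]
  field_simp
  ring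

lemma FG_eq (μ lam y : ℝ) (hμ : 0 < μ) (hlam : 0 < lam) (hy : 0 < y) :
    stdNormalCDF (Real.sqrt (lam / y) * (y / μ - 1))
        - (lam - μ) / (lam + μ) * Real.exp (2 * lam / μ)
            * stdNormalCDF (-(Real.sqrt (lam / y)) * (y / μ + 1))
        + Real.sqrt (2 * lam) * μ / (Real.sqrt (Real.pi * y) * (lam + μ))
            * Real.exp (lam / μ) * Real.exp (-(lam / (2 * y)) * (y ^ 2 / μ ^ 2 + 1))
      = Ggig μ lam y := by
  have hs0 : 0 < Real.sqrt y := Real.sqrt_pos.mpr hy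
  have hss : Real.sqrt y * Real.sqrt y = y := Real.mul_self_sqrt hy.le
  have hdiv : Real.sqrt (lam / y) = Real.sqrt lam / Real.sqrt y := Real.sqrt_div hlam.le y
  have hmul : Real.sqrt (Real.pi * y) = Real.sqrt Real.pi * Real.sqrt y :=
    Real.sqrt_mul Real.pi_pos.le y
  have e1 : Real.sqrt lam / Real.sqrt y * (y / μ - 1)
      = Real.sqrt lam * (Real.sqrt y / μ - (Real.sqrt y)⁻¹) := by
    rw [← hss]; field_simp; ring_nf
    rw [Real.sqrt_sq hs0.le]; ring
    try exact Or.inl trivial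
  have e2 : -(Real.sqrt lam / Real.sqrt y) * (y / μ + 1)
      = -(Real.sqrt lam) * (Real.sqrt y / μ + (Real.sqrt y)⁻¹) := by
    rw [← hss]; field_simp; ring_nf
    rw [Real.sqrt_sq hs0.le]; ring
    try exact Or.inl trivial
  have e3 : -(lam / (2 * y)) * (y ^ 2 / μ ^ 2 + 1)
      = -(lam / (2 * μ ^ 2)) * y - lam / 2 * y⁻¹ := by
    field_simp; ring
  rw [hdiv, hmul, e1, e2, e3]
  unfold Ggig
  have hπ : (0:ℝ) < Real.sqrt Real.pi := Real.sqrt_pos.mpr Real.pi_pos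
  have hlμ : lam + μ ≠ 0 := by positivity
  field_simp

lemma gigE_cont (μ lam z : ℝ) (hμ : 0 < μ) (hz : z ≠ 0) :
    ContinuousAt (fun w => gigE w μ lam) z := by
  have hden : ContinuousAt (fun w : ℝ => -(lam * (w - μ) ^ 2) / (2 * μ ^ 2 * w)) z :=
    ContinuousAt.div (by fun_prop) (by fun_prop) (mul_ne_zero (by positivity) hz)
  exact Real.continuous_exp.continuousAt.comp hden

lemma gigE_le (μ lam z : ℝ) (hμ : 0 < μ) (hlam : 0 < lam) (hz : 0 < z) :
    gigE z μ lam ≤ Real.exp (lam / μ) * Real.exp (-(lam / 2) * z⁻¹) := by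
  rw [← Real.exp_add, gigE, Real.exp_le_exp]
  have key : lam / μ + -(lam / 2) * z⁻¹ - (-(lam * (z - μ) ^ 2) / (2 * μ ^ 2 * z))
      = lam * z / (2 * μ ^ 2) := by
    field_simp; ring
  have hpos : (0:ℝ) ≤ lam * z / (2 * μ ^ 2) :=
    div_nonneg (mul_nonneg hlam.le hz.le) (by positivity)
  linarith

lemma f_tendsto_zero (μ lam : ℝ) (hμ : 0 < μ) (hlam : 0 < lam) :
    Filter.Tendsto (fun z : ℝ => z ^ (-(5:ℝ)/2) * Real.exp (-(lam / 2) * z⁻¹))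
      (𝓝[>] 0) (𝓝 0) := by
  have h := (tendsto_rpow_mul_exp_neg_mul_atTop_nhds_zero ((5:ℝ)/2) (lam / 2)
      (by positivity)).comp tendsto_inv_nhdsGT_zero
  refine h.congr' ?_
  filter_upwards [self_mem_nhdsWithin] with z (hz : (0:ℝ) < z)
  simp only [Function.comp]
  have : (z⁻¹) ^ ((5:ℝ)/2) = z ^ (-(5:ℝ)/2) := by
    rw [← Real.rpow_neg_one z, ← Real.rpow_mul hz.le]
    norm_num
  rw [this]

lemma f_contOn (μ lam x : ℝ) (hμ : 0 < μ) (hlam : 0 < lam) (hx : 0 < x) :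
    ContinuousOn (fun z : ℝ =>
      lam ^ ((3:ℝ)/2) * μ / (Real.sqrt (2 * Real.pi) * (lam + μ)) * z ^ (-(5:ℝ)/2)
        * gigE z μ lam) (Icc 0 x) := by
  set C := lam ^ ((3:ℝ)/2) * μ / (Real.sqrt (2 * Real.pi) * (lam + μ)) with hC
  have hC0 : 0 ≤ C := by rw [hC]; positivity
  intro z hz
  rcases eq_or_lt_of_le hz.1 with h0 | h0
  · subst h0
    have hf0 : C * (0:ℝ) ^ (-(5:ℝ)/2) * gigE 0 μ lam = 0 := by
      rw [Real.zero_rpow (by norm_num)]; ring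
    show Filter.Tendsto _ (𝓝[Icc (0:ℝ) x] 0) (𝓝 (C * (0:ℝ) ^ (-(5:ℝ)/2) * gigE 0 μ lam))
    rw [hf0]
    set g : ℝ → ℝ := fun w => C * Real.exp (lam / μ)
        * (w ^ (-(5:ℝ)/2) * Real.exp (-(lam / 2) * w⁻¹)) with hg
    have hgt : Filter.Tendsto g (𝓝[Icc (0:ℝ) x] 0) (𝓝 0) := by
      have h1 : Filter.Tendsto g (𝓝[>] (0:ℝ)) (𝓝 0) := by
        have := (f_tendsto_zero μ lam hμ hlam).const_mul (C * Real.exp (lam / μ))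
        rw [mul_zero] at this
        exact this
      have hg0 : g 0 = 0 := by
        simp [hg, Real.zero_rpow (show (-(5:ℝ)/2) ≠ 0 by norm_num)]
      have h2 : Filter.Tendsto g (pure (0:ℝ)) (𝓝 0) := by
        simpa [hg0] using tendsto_pure_nhds g 0
      have hle : 𝓝[Icc (0:ℝ) x] 0 ≤ 𝓝[>] (0:ℝ) ⊔ pure 0 := by
        have hsub : Icc (0:ℝ) x ⊆ insert 0 (Ioi 0) := by
          intro w hw
          rcases eq_or_lt_of_le hw.1 with h | h
          · exact Or.inl h.symm
          · exact Or.inr h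
        calc 𝓝[Icc (0:ℝ) x] 0 ≤ 𝓝[insert (0:ℝ) (Ioi 0)] 0 := nhdsWithin_mono _ hsub
          _ = pure 0 ⊔ 𝓝[>] (0:ℝ) := nhdsWithin_insert _ _
          _ = 𝓝[>] (0:ℝ) ⊔ pure 0 := sup_comm _ _
      exact (Filter.tendsto_sup.mpr ⟨h1, h2⟩).mono_left hle
    refine tendsto_of_tendsto_of_tendsto_of_le_of_le' tendsto_const_nhds hgt ?_ ?_
    · filter_upwards [self_mem_nhdsWithin] with w hw
      have hw0 : (0:ℝ) ≤ w := hw.1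
      have : (0:ℝ) < gigE w μ lam := Real.exp_pos _
      exact mul_nonneg (mul_nonneg hC0 (Real.rpow_nonneg hw0 _)) this.le
    · filter_upwards [self_mem_nhdsWithin] with w hw
      rcases eq_or_lt_of_le hw.1 with h | h
      · rw [← h]
        have : C * (0:ℝ) ^ (-(5:ℝ)/2) * gigE 0 μ lam = 0 := by
          rw [Real.zero_rpow (by norm_num)]; ring
        rw [this, hg]
        simp [Real.zero_rpow (show (-(5:ℝ)/2) ≠ 0 by norm_num)]
      · calc C * w ^ (-(5:ℝ)/2) * gigE w μ lam
            ≤ C * w ^ (-(5:ℝ)/2) * (Real.exp (lam / μ) * Real.exp (-(lam / 2) * w⁻¹)) := by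
              refine mul_le_mul_of_nonneg_left (gigE_le μ lam w hμ hlam h) ?_
              exact mul_nonneg hC0 (Real.rpow_nonneg h.le _)
          _ = g w := by rw [hg]; ring
  · exact ((continuousAt_const.mul (Real.continuousAt_rpow_const z _ (Or.inl h0.ne'))).mul
      (gigE_cont μ lam z hμ h0.ne')).continuousWithinAt

lemma Ggig_tendsto (μ lam : ℝ) (hμ : 0 < μ) (hlam : 0 < lam) :
    Filter.Tendsto (fun a => Ggig μ lam a) (𝓝[>] (0:ℝ)) (𝓝 0) := by
  have hsa0 : Filter.Tendsto (fun a : ℝ => Real.sqrt a) (𝓝[>] (0:ℝ)) (𝓝 0) :=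
    (Real.continuous_sqrt.tendsto' 0 0 Real.sqrt_zero).mono_left nhdsWithin_le_nhds
  have hsa : Filter.Tendsto (fun a : ℝ => Real.sqrt a) (𝓝[>] (0:ℝ)) (𝓝[>] (0:ℝ)) := by
    rw [tendsto_nhdsWithin_iff]
    refine ⟨hsa0, ?_⟩
    filter_upwards [self_mem_nhdsWithin] with a (ha : (0:ℝ) < a)
    exact Real.sqrt_pos.mpr ha
  have hinv : Filter.Tendsto (fun a : ℝ => (Real.sqrt a)⁻¹) (𝓝[>] (0:ℝ)) Filter.atTop :=
    tendsto_inv_nhdsGT_zero.comp hsa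
  have hneg : Filter.Tendsto (fun a : ℝ => -(Real.sqrt lam) * (Real.sqrt a)⁻¹)
      (𝓝[>] (0:ℝ)) Filter.atBot :=
    Filter.Tendsto.const_mul_atTop_of_neg
      (neg_lt_zero.mpr (Real.sqrt_pos.mpr hlam)) hinv
  have harg1 : Filter.Tendsto (fun a : ℝ => Real.sqrt lam * (Real.sqrt a / μ - (Real.sqrt a)⁻¹))
      (𝓝[>] (0:ℝ)) Filter.atBot := by
    have h1 : Filter.Tendsto (fun a : ℝ => Real.sqrt lam / μ * Real.sqrt a) (𝓝[>] (0:ℝ))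
        (𝓝 (Real.sqrt lam / μ * 0)) := tendsto_const_nhds.mul hsa0
    exact (h1.add_atBot hneg).congr fun a => by ring
  have harg2 : Filter.Tendsto (fun a : ℝ => -(Real.sqrt lam) * (Real.sqrt a / μ + (Real.sqrt a)⁻¹))
      (𝓝[>] (0:ℝ)) Filter.atBot := by
    have h1 : Filter.Tendsto (fun a : ℝ => -(Real.sqrt lam) / μ * Real.sqrt a) (𝓝[>] (0:ℝ))
        (𝓝 (-(Real.sqrt lam) / μ * 0)) := tendsto_const_nhds.mul hsa0
    exact (h1.add_atBot hneg).congr fun a => by ring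
  have hT1 := cdf_atBot.comp harg1
  have hT2 := (cdf_atBot.comp harg2).const_mul ((lam - μ) / (lam + μ) * Real.exp (2 * lam / μ))
  have hT3 : Filter.Tendsto (fun a : ℝ =>
      Real.sqrt (2 * lam) * μ * Real.exp (lam / μ) / (Real.sqrt Real.pi * (lam + μ))
        * ((Real.sqrt a)⁻¹ * Real.exp (-(lam / (2 * μ ^ 2)) * a - lam / 2 * a⁻¹)))
      (𝓝[>] (0:ℝ)) (𝓝 (Real.sqrt (2 * lam) * μ * Real.exp (lam / μ)
        / (Real.sqrt Real.pi * (lam + μ)) * 0)) := by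
    apply Filter.Tendsto.const_mul
    have hmain : Filter.Tendsto (fun a : ℝ => a ^ (-(1:ℝ)/2) * Real.exp (-(lam / 2) * a⁻¹))
        (𝓝[>] (0:ℝ)) (𝓝 0) := by
      have h := (tendsto_rpow_mul_exp_neg_mul_atTop_nhds_zero ((1:ℝ)/2) (lam / 2)
          (by positivity)).comp tendsto_inv_nhdsGT_zero
      refine h.congr' ?_
      filter_upwards [self_mem_nhdsWithin] with a (ha : (0:ℝ) < a)
      simp only [Function.comp]
      have : (a⁻¹) ^ ((1:ℝ)/2) = a ^ (-(1:ℝ)/2) := by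
        rw [← Real.rpow_neg_one a, ← Real.rpow_mul ha.le]
        norm_num
      rw [this]
    have hexp1 : Filter.Tendsto (fun a : ℝ => Real.exp (-(lam / (2 * μ ^ 2)) * a))
        (𝓝[>] (0:ℝ)) (𝓝 1) := by
      have hco : Continuous (fun a : ℝ => Real.exp (-(lam / (2 * μ ^ 2)) * a)) := by continuity
      exact (hco.tendsto' 0 1 (by simp)).mono_left nhdsWithin_le_nhds
    have hprod := hmain.mul hexp1
    rw [zero_mul] at hprod
    refine hprod.congr' ?_
    filter_upwards [self_mem_nhdsWithin] with a (ha : (0:ℝ) < a)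
    have h1 : a ^ (-(1:ℝ)/2) = (Real.sqrt a)⁻¹ := by
      rw [Real.sqrt_eq_rpow, ← Real.rpow_neg ha.le]; norm_num
    rw [h1, mul_assoc, ← Real.exp_add,
      show -(lam / 2) * a⁻¹ + -(lam / (2 * μ ^ 2)) * a
        = -(lam / (2 * μ ^ 2)) * a - lam / 2 * a⁻¹ by ring]
  have hcomb := (hT1.sub hT2).add hT3
  have : (0:ℝ) - (lam - μ) / (lam + μ) * Real.exp (2 * lam / μ) * 0
      + Real.sqrt (2 * lam) * μ * Real.exp (lam / μ) / (Real.sqrt Real.pi * (lam + μ)) * 0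
      = 0 := by ring
  rw [this] at hcomb
  exact hcomb

/-- C.d.f. of the generalized inverse Gaussian distribution with `p = −3/2`. -/
theorem gig_cdf_neg_three_half (μ lam x : ℝ) (hμ : 0 < μ) (hlam : 0 < lam) (hx : 0 < x) :
    (∫ z in (0:ℝ)..x,
        lam ^ ((3:ℝ)/2) * μ / (Real.sqrt (2 * Real.pi) * (lam + μ)) * z ^ (-(5:ℝ)/2)
          * gigE z μ lam)
      = stdNormalCDF (Real.sqrt (lam / x) * (x / μ - 1))
        - (lam - μ) / (lam + μ) * Real.exp (2 * lam / μ)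
            * stdNormalCDF (-(Real.sqrt (lam / x)) * (x / μ + 1))
        + Real.sqrt (2 * lam) * μ / (Real.sqrt (Real.pi * x) * (lam + μ))
            * Real.exp (lam / μ) * Real.exp (-(lam / (2 * x)) * (x ^ 2 / μ ^ 2 + 1)) := by
  set f : ℝ → ℝ := fun z =>
    lam ^ ((3:ℝ)/2) * μ / (Real.sqrt (2 * Real.pi) * (lam + μ)) * z ^ (-(5:ℝ)/2)
      * gigE z μ lam with hf
  have hIntIcc : IntegrableOn f (Icc 0 x) volume :=
    (f_contOn μ lam x hμ hlam hx).integrableOn_Icc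
  have hIntu : IntegrableOn f (uIcc 0 x) volume := by
    rw [uIcc_of_le hx.le]; exact hIntIcc
  have hII : IntervalIntegrable f volume 0 x := hIntu.intervalIntegrable
  have key : ∀ a ∈ Ioo (0:ℝ) x, (∫ z in a..x, f z) = Ggig μ lam x - Ggig μ lam a := by
    intro a ha
    refine intervalIntegral.integral_eq_sub_of_hasDerivAt (fun t ht => ?_) (hII.mono_set ?_)
    · have ht0 : 0 < t := by
        rw [uIcc_of_le ha.2.le] at ht
        exact lt_of_lt_of_le ha.1 ht.1
      exact Ggig_hasDeriv μ lam t hμ hlam ht0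
    · rw [uIcc_of_le ha.2.le, uIcc_of_le hx.le]
      exact Icc_subset_Icc ha.1.le le_rfl
  have hprim : Filter.Tendsto (fun a => ∫ z in (0:ℝ)..a, f z) (𝓝[>] (0:ℝ)) (𝓝 0) := by
    have hc := intervalIntegral.continuousOn_primitive_interval (a := (0:ℝ)) (b := x)
      (μ := volume) hIntu
    have h0 : Filter.Tendsto (fun u => ∫ t in (0:ℝ)..u, f t) (𝓝[uIcc (0:ℝ) x] 0)
        (𝓝 (∫ t in (0:ℝ)..(0:ℝ), f t)) := hc 0 left_mem_uIcc
    rw [intervalIntegral.integral_same] at h0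
    refine h0.mono_left ?_
    rw [← nhdsWithin_Ioo_eq_nhdsGT hx]
    refine nhdsWithin_mono _ ?_
    rw [uIcc_of_le hx.le]
    exact Ioo_subset_Icc_self
  have hone : Filter.Tendsto
      (fun a => Ggig μ lam x - (∫ z in (0:ℝ)..x, f z) + ∫ z in (0:ℝ)..a, f z)
      (𝓝[>] (0:ℝ)) (𝓝 (Ggig μ lam x - (∫ z in (0:ℝ)..x, f z) + 0)) :=
    tendsto_const_nhds.add hprim
  have heq : (fun a => Ggig μ lam a) =ᶠ[𝓝[>] (0:ℝ)]
      fun a => Ggig μ lam x - (∫ z in (0:ℝ)..x, f z) + ∫ z in (0:ℝ)..a, f z := by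
    filter_upwards [Ioo_mem_nhdsGT_of_mem (show (0:ℝ) ∈ Ico (0:ℝ) x from ⟨le_rfl, hx⟩)]
      with a ha
    have hsplit : (∫ z in (0:ℝ)..a, f z) + ∫ z in a..x, f z = ∫ z in (0:ℝ)..x, f z := by
      refine intervalIntegral.integral_add_adjacent_intervals (hII.mono_set ?_) (hII.mono_set ?_)
      · rw [uIcc_of_le ha.1.le, uIcc_of_le hx.le]
        exact Icc_subset_Icc le_rfl ha.2.le
      · rw [uIcc_of_le ha.2.le, uIcc_of_le hx.le]
        exact Icc_subset_Icc ha.1.le le_rfl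
    have hk := key a ha
    linarith
  have hlim2 := hone.congr' heq.symm
  have huniq := tendsto_nhds_unique (Ggig_tendsto μ lam hμ hlam) hlim2
  have hL : (∫ z in (0:ℝ)..x, f z) = Ggig μ lam x := by linarith
  rw [hL]
  exact (FG_eq μ lam x hμ hlam hx).symm
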